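/- arXiv:1510.07220 — 3 statements merged into one kernel-verified Lean document; each statement's English description precedes it below -/
import Mathlib

section
/- For a digit n with 1 ≤ n ≤ 9 and k ≥ 1, the number of integers in {1, 2, ..., (n+1)·10^k − 1} whose leading decimal digit equals n is exactly (10^{k+1} − 1)/9. -/
def leadingDigit (b x : ℕ) : ℕ := x / b ^ Nat.log b x

theorem count_leading_max (n k : ℕ) (hn : 1 ≤ n) (hn9 : n ≤ 9) (hk : 1 ≤ k) :
    ((Finset.Icc 1 ((n + 1) * 10 ^ k - 1)).filter (fun x => leadingDigit 10 x = n)).card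
      = (10 ^ (k + 1) - 1) / 9 := by
  have hset : (Finset.Icc 1 ((n + 1) * 10 ^ k - 1)).filter (fun x => leadingDigit 10 x = n)
      = (Finset.range (k+1)).biUnion
          (fun j => Finset.Icc (n * 10 ^ j) ((n+1) * 10 ^ j - 1)) := by
    ext x
    rw [Finset.mem_filter]
    simp only [Finset.mem_filter, Finset.mem_Icc, Finset.mem_biUnion, Finset.mem_range,
      leadingDigit]
    constructor
    · rintro ⟨⟨hx1, hx2⟩, hld⟩
      set j := Nat.log 10 x with hj
      have hpos : (0:ℕ) < 10 ^ j := Nat.pow_pos (by norm_num)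
      have h1 : n * 10 ^ j ≤ x := by
        rw [← hld]; exact Nat.div_mul_le_self _ _
      have h2 : x < (n + 1) * 10 ^ j := by
        have : x / 10 ^ j < n + 1 := by omega
        exact (Nat.div_lt_iff_lt_mul hpos).mp this
      have hxlt : x < 10 ^ (k + 1) := by
        have : (n + 1) * 10 ^ k ≤ 10 * 10 ^ k := Nat.mul_le_mul_right _ (by omega)
        have h10 : 10 * 10 ^ k = 10 ^ (k + 1) := by ring
        omega
      have hjk : j < k + 1 := Nat.log_lt_of_lt_pow (by omega) hxlt
      exact ⟨j, hjk, h1, by omega⟩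
    · rintro ⟨j, hjk, h1, h2⟩
      have hpos : (0:ℕ) < 10 ^ j := Nat.pow_pos (by norm_num)
      have hx1 : 1 ≤ x := le_trans (by nlinarith) h1
      have h2' : x < (n + 1) * 10 ^ j := by omega
      have hxlt : x < 10 ^ (j + 1) := by
        have : (n + 1) * 10 ^ j ≤ 10 * 10 ^ j := Nat.mul_le_mul_right _ (by omega)
        have h10 : 10 * 10 ^ j = 10 ^ (j + 1) := by ring
        omega
      have hlog : Nat.log 10 x = j :=
        Nat.log_eq_of_pow_le_of_lt_pow (le_trans (Nat.le_mul_of_pos_left _ (by omega)) h1) hxlt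
      have hdiv : x / 10 ^ j = n := Nat.div_eq_of_lt_le h1 h2'
      refine ⟨⟨hx1, ?_⟩, by rw [hlog]; exact hdiv⟩
      have hmono : (10:ℕ) ^ j ≤ 10 ^ k := Nat.pow_le_pow_right (by norm_num) (by omega)
      have : (n + 1) * 10 ^ j ≤ (n + 1) * 10 ^ k := Nat.mul_le_mul_left _ hmono
      omega
  rw [hset, Finset.card_biUnion]
  · have hcard : ∀ j, (Finset.Icc (n * 10 ^ j) ((n+1) * 10 ^ j - 1)).card = 10 ^ j := by
      intro j
      have hpos : (0:ℕ) < 10 ^ j := Nat.pow_pos (by norm_num)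
      rw [Nat.card_Icc]
      have : n * 10 ^ j ≤ (n+1) * 10 ^ j := Nat.mul_le_mul_right _ (by omega)
      have h : (n+1) * 10 ^ j = n * 10 ^ j + 10 ^ j := by ring
      omega
    simp only [hcard]
    exact Nat.geomSum_eq (by norm_num) _
  · intro a ha b hb hab
    simp only [Finset.coe_range, Set.mem_Iio] at ha hb
    wlog h : a < b generalizing a b
    · exact (this (a := b) (b := a) hab.symm hb ha (by omega)).symm
    simp only [Finset.disjoint_left, Finset.mem_Icc]
    rintro x ⟨h1, h2⟩ ⟨h3, h4⟩
    have hpos : (0:ℕ) < 10 ^ a := Nat.pow_pos (by norm_num)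
    have hle : (n + 1) * 10 ^ a ≤ 10 * 10 ^ a := Nat.mul_le_mul_right _ (by omega)
    have h10 : 10 * 10 ^ a = 10 ^ (a + 1) := by ring
    have hmono : (10:ℕ) ^ (a+1) ≤ 10 ^ b := Nat.pow_le_pow_right (by norm_num) (by omega)
    have hb' : 10 ^ b ≤ n * 10 ^ b := Nat.le_mul_of_pos_left _ (by omega)
    omega
end

section
/- For all digits n with 1 ≤ n ≤ 9, the limiting minimal frequency 1/(9n) is strictly less than the Benford probability log₁₀(1 + 1/n), which is strictly less than the limiting maximal frequency 10/(9(n+1)). -/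
theorem benford_between (n : ℕ) (hn : 1 ≤ n) (hn9 : n ≤ 9) :
    1 / (9 * (n : ℝ)) < Real.logb 10 (1 + 1 / n) ∧
    Real.logb 10 (1 + 1 / n) < 10 / (9 * ((n : ℝ) + 1)) := by
  have hn1 : (1 : ℝ) ≤ (n : ℝ) := by exact_mod_cast hn
  have hnpos : (0 : ℝ) < n := by linarith
  -- bounds on log 10
  have hlog2lt : Real.log 2 < 0.6931471808 := Real.log_two_lt_d9
  have hlog2gt : (0.6931471803 : ℝ) < Real.log 2 := Real.log_two_gt_d9
  have h1024 : Real.log 1000 < Real.log 1024 := Real.log_lt_log (by norm_num) (by norm_num)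
  have h1000 : Real.log 1000 = 3 * Real.log 10 := by
    rw [show (1000 : ℝ) = 10 ^ 3 by norm_num, Real.log_pow]; push_cast; ring
  have h1024' : Real.log 1024 = 10 * Real.log 2 := by
    rw [show (1024 : ℝ) = 2 ^ 10 by norm_num, Real.log_pow]; push_cast; ring
  have hlog10lt : Real.log 10 < 2.311 := by
    rw [h1000, h1024'] at h1024; linarith
  have h8 : Real.log 8 < Real.log 10 := Real.log_lt_log (by norm_num) (by norm_num)
  have h8' : Real.log 8 = 3 * Real.log 2 := by
    rw [show (8 : ℝ) = 2 ^ 3 by norm_num, Real.log_pow]; push_cast; ring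
  have hlog10gt : (2.079 : ℝ) < Real.log 10 := by rw [h8'] at h8; linarith
  have hlog10pos : (0 : ℝ) < Real.log 10 := by linarith
  -- bounds on log (1 + 1/n)
  have hxpos : (0 : ℝ) < 1 + 1 / n := by positivity
  have hupper : Real.log (1 + 1 / (n : ℝ)) < 1 / n := by
    have h := Real.add_one_lt_exp (x := 1 / (n : ℝ)) (one_div_pos.mpr hnpos).ne'
    calc Real.log (1 + 1 / (n : ℝ)) < Real.log (Real.exp (1 / n)) :=
          Real.log_lt_log hxpos (by linarith)
      _ = 1 / n := Real.log_exp _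
  have hlower : 1 / ((n : ℝ) + 1) < Real.log (1 + 1 / (n : ℝ)) := by
    have hne : (-(1 / ((n : ℝ) + 1))) ≠ 0 := neg_ne_zero.mpr (one_div_pos.mpr (by positivity)).ne'
    have h := Real.add_one_lt_exp hne
    -- -(1/(n+1)) + 1 = n/(n+1) < exp(-(1/(n+1)))
    have hexp : Real.exp (1 / ((n : ℝ) + 1)) < 1 + 1 / n := by
      have hpos : (0 : ℝ) < (n : ℝ) / (n + 1) := by positivity
      have h2 : (n : ℝ) / (n + 1) < Real.exp (-(1 / ((n : ℝ) + 1))) := by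
        have : (-(1 / ((n : ℝ) + 1))) + 1 = (n : ℝ) / (n + 1) := by
          field_simp
          ring
        linarith [h, this.symm.le.trans_lt h]
      have h3 : Real.exp (1 / ((n : ℝ) + 1)) = (Real.exp (-(1 / ((n : ℝ) + 1))))⁻¹ := by
        rw [← Real.exp_neg]; ring_nf
      rw [h3]
      have h4 : ((n : ℝ) / (n + 1))⁻¹ = 1 + 1 / n := by field_simp
      calc (Real.exp (-(1 / ((n : ℝ) + 1))))⁻¹ < ((n : ℝ) / (n + 1))⁻¹ := by
            exact inv_strictAnti₀ hpos h2
        _ = 1 + 1 / n := h4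
    calc 1 / ((n : ℝ) + 1) = Real.log (Real.exp (1 / ((n : ℝ) + 1))) := (Real.log_exp _).symm
      _ < Real.log (1 + 1 / n) := Real.log_lt_log (Real.exp_pos _) hexp
  rw [Real.logb]
  constructor
  · rw [div_lt_div_iff₀ (by positivity) hlog10pos]
    -- 1 * log 10 < log(1+1/n) * (9n)
    have key : Real.log 10 < 1 / ((n : ℝ) + 1) * (9 * n) := by
      rw [div_mul_eq_mul_div, lt_div_iff₀ (by positivity)]
      nlinarith
    nlinarith [mul_pos (show (0:ℝ) < 9 * n by positivity) (sub_pos.mpr hlower)]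
  · rw [div_lt_div_iff₀ hlog10pos (by positivity)]
    -- log(1+1/n) * (9(n+1)) < 10 * log 10
    have key : 1 / (n : ℝ) * (9 * ((n : ℝ) + 1)) < 10 * Real.log 10 := by
      rw [div_mul_eq_mul_div, div_lt_iff₀ hnpos]
      have hn9' : (n : ℝ) ≤ 9 := by exact_mod_cast hn9
      nlinarith
    nlinarith [mul_pos (show (0:ℝ) < 9 * ((n:ℝ) + 1) by positivity) (sub_pos.mpr hupper)]
end

section
/- In base N ≥ 2, the limiting minimal and maximal frequencies of leading digit n (1 ≤ n ≤ N−1) among {1,...,m} as m → ∞ are f_min = 1/((N−1)n) and f_max = N/((N−1)(n+1)); that is, the frequency along m = n·N^k − 1 tends to 1/((N−1)n) and along m = (n+1)·N^k − 1 tends to N/((N−1)(n+1)). -/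
open Finset Filter

lemma ld_iff (N n : ℕ) (hN : 2 ≤ N) (hn : 1 ≤ n) (hnN : n ≤ N - 1) (x : ℕ) (hx : 1 ≤ x) :
    leadingDigit N x = n ↔ ∃ j, n * N ^ j ≤ x ∧ x < (n + 1) * N ^ j := by
  have hN0 : 0 < N := by omega
  constructor
  · intro h
    refine ⟨Nat.log N x, ?_, ?_⟩
    · rw [← h]; exact Nat.div_mul_le_self x _
    · rw [← h]
      have hp : 0 < N ^ Nat.log N x := Nat.pow_pos hN0
      have heq := Nat.div_add_mod' x (N ^ Nat.log N x)
      have hm := Nat.mod_lt x hp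
      calc x = x / N ^ Nat.log N x * N ^ Nat.log N x + x % N ^ Nat.log N x := heq.symm
        _ < x / N ^ Nat.log N x * N ^ Nat.log N x + N ^ Nat.log N x :=
            Nat.add_lt_add_left hm _
        _ = (x / N ^ Nat.log N x + 1) * N ^ Nat.log N x := by ring
  · rintro ⟨j, h1, h2⟩
    have hlog : Nat.log N x = j := by
      apply Nat.log_eq_of_pow_le_of_lt_pow
      · calc N ^ j = 1 * N ^ j := (one_mul _).symm
          _ ≤ n * N ^ j := Nat.mul_le_mul_right _ hn
          _ ≤ x := h1
      · calc x < (n + 1) * N ^ j := h2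
          _ ≤ N * N ^ j := Nat.mul_le_mul_right _ (by omega)
          _ = N ^ (j + 1) := by ring
    unfold leadingDigit
    rw [hlog]
    exact Nat.div_eq_of_lt_le h1 h2

lemma count_eq (N n : ℕ) (hN : 2 ≤ N) (hn : 1 ≤ n) (hnN : n ≤ N - 1) (m K : ℕ)
    (h1 : ∀ j < K, (n + 1) * N ^ j ≤ m + 1) (h2 : m < n * N ^ K) :
    ((Finset.Icc 1 m).filter (fun x => leadingDigit N x = n)).card
      = ∑ j ∈ Finset.range K, N ^ j := by
  have hN0 : 0 < N := by omega
  have hset : (Finset.Icc 1 m).filter (fun x => leadingDigit N x = n)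
      = (Finset.range K).biUnion (fun j => Finset.Ico (n * N ^ j) ((n + 1) * N ^ j)) := by
    ext x
    simp only [Finset.mem_filter, Finset.mem_Icc, Finset.mem_biUnion, Finset.mem_range,
      Finset.mem_Ico]
    constructor
    · rintro ⟨⟨hx1, hxm⟩, hld⟩
      obtain ⟨j, hj1, hj2⟩ := (ld_iff N n hN hn hnN x hx1).1 hld
      refine ⟨j, ?_, hj1, hj2⟩
      by_contra h
      push_neg at h
      have : n * N ^ K ≤ n * N ^ j :=
        Nat.mul_le_mul_left _ (Nat.pow_le_pow_right hN0 h)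
      omega
    · rintro ⟨j, hjK, hj1, hj2⟩
      have hp : 0 < N ^ j := Nat.pow_pos hN0
      have hx1 : 1 ≤ x := by nlinarith
      refine ⟨⟨hx1, ?_⟩, (ld_iff N n hN hn hnN x hx1).2 ⟨j, hj1, hj2⟩⟩
      have := h1 j hjK
      omega
  rw [hset, Finset.card_biUnion]
  · apply Finset.sum_congr rfl
    intro j _
    rw [Nat.card_Ico]
    have hp : 0 < N ^ j := Nat.pow_pos hN0
    ring_nf
    omega
  · intro i hi j hj hij
    wlog hlt : i < j generalizing i j
    · exact Disjoint.symm (this hj hi hij.symm (by omega))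
    have hkey : (n + 1) * N ^ i ≤ n * N ^ j := by
      calc (n + 1) * N ^ i ≤ n * N * N ^ i := by
            have : n + 1 ≤ n * N := by nlinarith
            exact Nat.mul_le_mul_right _ this
        _ = n * N ^ (i + 1) := by ring
        _ ≤ n * N ^ j := Nat.mul_le_mul_left _ (Nat.pow_le_pow_right hN0 (by omega))
    rw [Function.onFun, Finset.disjoint_left]
    intro x hx hx'
    simp only [Finset.mem_Ico] at hx hx'
    omega

theorem base_N_limits (N n : ℕ) (hN : 2 ≤ N) (hn : 1 ≤ n) (hnN : n ≤ N - 1) :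
    Filter.Tendsto (fun k : ℕ =>
        (((Finset.Icc 1 (n * N ^ k - 1)).filter (fun x => leadingDigit N x = n)).card : ℝ)
          / (n * N ^ k - 1))
      Filter.atTop (nhds (1 / (((N : ℝ) - 1) * n))) ∧
    Filter.Tendsto (fun k : ℕ =>
        (((Finset.Icc 1 ((n + 1) * N ^ k - 1)).filter (fun x => leadingDigit N x = n)).card : ℝ)
          / ((n + 1) * N ^ k - 1))
      Filter.atTop (nhds ((N : ℝ) / (((N : ℝ) - 1) * (n + 1)))) := by
  have hN0 : 0 < N := by omega
  have hN1R : (1 : ℝ) < N := by exact_mod_cast (by omega : 1 < N)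
  set r : ℝ := (N : ℝ)⁻¹ with hrdef
  have hrpos : 0 < r := by positivity
  have hr01 : |r| < 1 := by
    rw [abs_of_pos hrpos, hrdef]
    exact inv_lt_one_of_one_lt₀ hN1R
  have hrk : Tendsto (fun k : ℕ => r ^ k) atTop (nhds 0) :=
    tendsto_pow_atTop_nhds_zero_of_abs_lt_one hr01
  have hNne1 : (N : ℝ) ≠ 1 := ne_of_gt hN1R
  have hN1pos : (0 : ℝ) < (N : ℝ) - 1 := by linarith
  have hnR : (1 : ℝ) ≤ (n : ℝ) := by exact_mod_cast hn
  constructor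
  · have hlim : Tendsto (fun k : ℕ => (1 - r ^ k) / (((N : ℝ) - 1) * ((n : ℝ) - r ^ k)))
        atTop (nhds (1 / (((N : ℝ) - 1) * (n : ℝ)))) := by
      have h1 : Tendsto (fun k : ℕ => 1 - r ^ k) atTop (nhds 1) := by
        simpa using (tendsto_const_nhds (x := (1 : ℝ))).sub hrk
      have h2 : Tendsto (fun k : ℕ => ((N : ℝ) - 1) * ((n : ℝ) - r ^ k)) atTop
          (nhds (((N : ℝ) - 1) * (n : ℝ))) := by
        have := ((tendsto_const_nhds (x := (n : ℝ))).sub hrk).const_mul ((N : ℝ) - 1)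
        simpa using this
      have hne : ((N : ℝ) - 1) * (n : ℝ) ≠ 0 := by nlinarith
      have := h1.div h2 hne
      exact this
    refine hlim.congr' ?_
    filter_upwards [eventually_ge_atTop 1] with k hk
    have hNk1 : N ≤ N ^ k := by
      calc N = N ^ 1 := (pow_one N).symm
        _ ≤ N ^ k := Nat.pow_le_pow_right hN0 hk
    have hm2 : 2 ≤ n * N ^ k := by nlinarith
    have hcount := count_eq N n hN hn hnN (n * N ^ k - 1) k
      (by
        intro j hj
        have e1 : (n + 1) * N ^ j ≤ N * N ^ j := Nat.mul_le_mul_right _ (by omega)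
        have e2 : N * N ^ j = N ^ (j + 1) := by ring
        have e3 : N ^ (j + 1) ≤ N ^ k := Nat.pow_le_pow_right hN0 (by omega)
        have e4 : N ^ k ≤ n * N ^ k := Nat.le_mul_of_pos_left _ hn
        omega)
      (by omega)
    rw [hcount]
    have hcast1 : ((∑ j ∈ Finset.range k, N ^ j : ℕ) : ℝ) = ((N : ℝ) ^ k - 1) / ((N : ℝ) - 1) := by
      push_cast
      exact geom_sum_eq hNne1 k
    rw [hcast1]
    have hNkR : (2 : ℝ) ≤ (N : ℝ) ^ k := by
      calc (2 : ℝ) ≤ (N : ℝ) := by exact_mod_cast hN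
        _ ≤ (N : ℝ) ^ k := by exact_mod_cast hNk1
    have hNk0 : ((N : ℝ) ^ k) ≠ 0 := by positivity
    have hden : (n : ℝ) * (N : ℝ) ^ k - 1 ≠ 0 := by
      have : (2 : ℝ) ≤ (n : ℝ) * (N : ℝ) ^ k := by exact_mod_cast hm2
      linarith
    have hinv1 : ((N : ℝ) ^ k)⁻¹ < 1 := by
      rw [inv_lt_one₀ (by positivity)]
      linarith
    have hden2 : (n : ℝ) - r ^ k ≠ 0 := by
      rw [hrdef, inv_pow]
      have : ((N : ℝ) ^ k)⁻¹ < 1 := hinv1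
      linarith
    rw [hrdef, inv_pow]
    field_simp
  · have hlim : Tendsto
        (fun k : ℕ => ((N : ℝ) - r ^ k) / (((N : ℝ) - 1) * (((n : ℝ) + 1) - r ^ k)))
        atTop (nhds ((N : ℝ) / (((N : ℝ) - 1) * ((n : ℝ) + 1)))) := by
      have h1 : Tendsto (fun k : ℕ => (N : ℝ) - r ^ k) atTop (nhds (N : ℝ)) := by
        simpa using (tendsto_const_nhds (x := (N : ℝ))).sub hrk
      have h2 : Tendsto (fun k : ℕ => ((N : ℝ) - 1) * (((n : ℝ) + 1) - r ^ k)) atTop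
          (nhds (((N : ℝ) - 1) * ((n : ℝ) + 1))) := by
        have := ((tendsto_const_nhds (x := (n : ℝ) + 1)).sub hrk).const_mul ((N : ℝ) - 1)
        simpa using this
      have hne : ((N : ℝ) - 1) * ((n : ℝ) + 1) ≠ 0 := by nlinarith
      have := h1.div h2 hne
      exact this
    refine hlim.congr' ?_
    filter_upwards [eventually_ge_atTop 1] with k hk
    have hNk1 : N ≤ N ^ k := by
      calc N = N ^ 1 := (pow_one N).symm
        _ ≤ N ^ k := Nat.pow_le_pow_right hN0 hk
    have hm2 : 2 ≤ (n + 1) * N ^ k := by nlinarith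
    have hcount := count_eq N n hN hn hnN ((n + 1) * N ^ k - 1) (k + 1)
      (by
        intro j hj
        have e1 : (n + 1) * N ^ j ≤ (n + 1) * N ^ k :=
          Nat.mul_le_mul_left _ (Nat.pow_le_pow_right hN0 (by omega))
        omega)
      (by
        have e1 : (n + 1) * N ^ k ≤ n * N * N ^ k := by
          have : n + 1 ≤ n * N := by nlinarith
          exact Nat.mul_le_mul_right _ this
        have e2 : n * N * N ^ k = n * N ^ (k + 1) := by ring
        omega)
    rw [hcount]
    have hcast1 : ((∑ j ∈ Finset.range (k + 1), N ^ j : ℕ) : ℝ)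
        = ((N : ℝ) ^ (k + 1) - 1) / ((N : ℝ) - 1) := by
      push_cast
      exact geom_sum_eq hNne1 (k + 1)
    rw [hcast1]
    have hNkR : (2 : ℝ) ≤ (N : ℝ) ^ k := by
      calc (2 : ℝ) ≤ (N : ℝ) := by exact_mod_cast hN
        _ ≤ (N : ℝ) ^ k := by exact_mod_cast hNk1
    have hNk0 : ((N : ℝ) ^ k) ≠ 0 := by positivity
    have hden : ((n : ℝ) + 1) * (N : ℝ) ^ k - 1 ≠ 0 := by
      have : (2 : ℝ) ≤ ((n : ℝ) + 1) * (N : ℝ) ^ k := by exact_mod_cast hm2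
      linarith
    have hinv1 : ((N : ℝ) ^ k)⁻¹ < 1 := by
      rw [inv_lt_one₀ (by positivity)]
      linarith
    have hden2 : ((n : ℝ) + 1) - r ^ k ≠ 0 := by
      rw [hrdef, inv_pow]
      linarith
    rw [hrdef, inv_pow, pow_succ]
    field_simp
end
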